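/- Let 1 < q < p < ∞ and 0 < s < 1. If a nonempty set E ⊂ X satisfies the upper Aikawa condition with exponent α = sq, then the upper Assouad codimension of E is at most sp. -/

import Mathlib

open Metric MeasureTheory Set
open scoped ENNReal NNReal

noncomputable def diamBound {X : Type*} [PseudoEMetricSpace X] (E : Set X) : ℝ≥0∞ :=
  haveI := Classical.propDecidable
  if EMetric.diam E = 0 then EMetric.diam (Set.univ : Set X) else EMetric.diam E

def upperAikawaCond {X : Type*} [MetricSpace X] [MeasurableSpace X]
    (μ : Measure X) (E : Set X) (α : ℝ) : Prop :=
  ∀ ε : ℝ, 0 < ε → ∃ δ : ℝ, 0 < δ ∧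
    ∀ z ∈ E, ∀ R : ℝ, 0 < R → ENNReal.ofReal R < diamBound E →
      ∀ K : Set X, MeasurableSet K →
        μ (ball z R \ K) ≤ ENNReal.ofReal δ * μ (ball z R) →
        ENNReal.ofReal (R ^ (-α) / ε) ≤
          (μ (ball z R))⁻¹ *
            ∫⁻ y in ball z R ∩ K, ENNReal.ofReal (infDist y E ^ (-α)) ∂μ

noncomputable def upperAssouadCodim {X : Type*} [MetricSpace X] [MeasurableSpace X]
    (μ : Measure X) (E : Set X) : ℝ :=
  sInf {Q : ℝ | 0 ≤ Q ∧ ∃ c : ℝ, 0 < c ∧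
    ∀ z ∈ E, ∀ r R : ℝ, 0 < r → r < R → ENNReal.ofReal R < diamBound E →
      ENNReal.ofReal (c * (r / R) ^ Q) * μ (ball z R) ≤
        μ ({x | infDist x E < r} ∩ ball z R)}

private lemma aux_doubling_pow {X : Type*} [MetricSpace X] [MeasurableSpace X]
    (μ : Measure X) (c_μ : ℝ) (hc : 0 ≤ c_μ)
    (hdoubling : ∀ (x : X) (ρ : ℝ), 0 < ρ →
      μ (ball x (2 * ρ)) ≤ ENNReal.ofReal c_μ * μ (ball x ρ)) :
    ∀ (n : ℕ) (x : X) (t : ℝ), 0 < t →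
      μ (ball x ((2:ℝ)^n * t)) ≤ ENNReal.ofReal (c_μ^n) * μ (ball x t) := by
  intro n
  induction n with
  | zero => intro x t ht; simp
  | succ n ih =>
    intro x t ht
    have h1 : (2:ℝ)^(n+1) * t = 2 * ((2:ℝ)^n * t) := by ring
    rw [h1]
    calc μ (ball x (2 * ((2:ℝ)^n * t)))
        ≤ ENNReal.ofReal c_μ * μ (ball x ((2:ℝ)^n * t)) := hdoubling x _ (by positivity)
      _ ≤ ENNReal.ofReal c_μ * (ENNReal.ofReal (c_μ^n) * μ (ball x t)) := by
          gcongr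
          exact ih x t ht
      _ = ENNReal.ofReal (c_μ^(n+1)) * μ (ball x t) := by
          rw [← mul_assoc, ← ENNReal.ofReal_mul hc, pow_succ]
          ring_nf

private lemma aux_doubling_le {X : Type*} [MetricSpace X] [MeasurableSpace X]
    (μ : Measure X) (c_μ : ℝ) (hc : 0 ≤ c_μ)
    (hdoubling : ∀ (x : X) (ρ : ℝ), 0 < ρ →
      μ (ball x (2 * ρ)) ≤ ENNReal.ofReal c_μ * μ (ball x ρ))
    (n : ℕ) (x : X) (t t' : ℝ) (ht : 0 < t) (h : t' ≤ 2^n * t) :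
    μ (ball x t') ≤ ENNReal.ofReal (c_μ^n) * μ (ball x t) :=
  le_trans (measure_mono (ball_subset_ball h)) (aux_doubling_pow μ c_μ hc hdoubling n x t ht)

private lemma aux_dyadic : ∀ (N : ℕ) (r d : ℝ), r ≤ d → d < 2^(N+1) * r →
    ∃ j ≤ N, (2:ℝ)^j * r ≤ d ∧ d < 2^(j+1) * r := by
  intro N
  induction N with
  | zero => intro r d h1 h2; exact ⟨0, le_rfl, by simpa using h1, by simpa using h2⟩
  | succ N ih =>
    intro r d h1 h2
    by_cases h : d < 2^(N+1) * r
    · obtain ⟨j, hj, h3, h4⟩ := ih r d h1 h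
      exact ⟨j, hj.trans (Nat.le_succ N), h3, h4⟩
    · push_neg at h
      exact ⟨N+1, le_rfl, h, h2⟩

set_option maxHeartbeats 4000000 in
theorem upperAssouadCodim_le_of_upperAikawa {X : Type*} [MetricSpace X] [MeasurableSpace X]
    [BorelSpace X] [Nontrivial X]
    (μ : Measure X) (c_μ : ℝ) (hc : 1 < c_μ)
    (hball : ∀ (x : X) (ρ : ℝ), 0 < ρ → 0 < μ (ball x ρ) ∧ μ (ball x ρ) < ⊤)
    (hdoubling : ∀ (x : X) (ρ : ℝ), 0 < ρ →
      μ (ball x (2 * ρ)) ≤ ENNReal.ofReal c_μ * μ (ball x ρ))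
    (q p s : ℝ) (hq : 1 < q) (hqp : q < p) (hs0 : 0 < s) (hs1 : s < 1)
    (E : Set X) (hE : E.Nonempty)
    (haik : upperAikawaCond μ E (s * q)) :
    upperAssouadCodim μ E ≤ s * p := by
  classical
  have hc0 : (0:ℝ) < c_μ := lt_trans one_pos hc
  set α := s * q with hαdef
  set β := s * p with hβdef
  have hα : 0 < α := mul_pos hs0 (lt_trans one_pos hq)
  have hβ : 0 < β := mul_pos hs0 (lt_trans (lt_trans one_pos hq) hqp)
  have hαβ : α < β := by
    rw [hαdef, hβdef]
    exact mul_lt_mul_of_pos_left hqp hs0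
  set σ := (2:ℝ) ^ (-((β - α)/2)) with hσdef
  have hσ0 : 0 < σ := Real.rpow_pos_of_pos two_pos _
  have hσ1 : σ < 1 := Real.rpow_lt_one_of_one_lt_of_neg one_lt_two (by linarith)
  have h2ne : ((2:ℝ)^(5*α)) ≠ 0 := ne_of_gt (Real.rpow_pos_of_pos two_pos _)
  set ε := min ((1-σ) * (2:ℝ)^(-α) / (4 * c_μ^4)) ((2:ℝ)^(-(5*α))/20) with hεdef
  have hε0 : 0 < ε := by
    apply lt_min
    · apply div_pos (mul_pos (by linarith) (Real.rpow_pos_of_pos two_pos _)) (by positivity)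
    · positivity
  obtain ⟨δ, hδ0, hδ⟩ := haik ε hε0
  set c₀ := min δ ((c_μ^5)⁻¹) with hc₀def
  have hc₀0 : 0 < c₀ := lt_min hδ0 (by positivity)
  have hc₀δ : c₀ ≤ δ := min_le_left _ _
  have hc₀c : c₀ ≤ (c_μ^5)⁻¹ := min_le_right _ _
  have hErmeas : ∀ r : ℝ, MeasurableSet {x : X | infDist x E < r} := fun r =>
    (isOpen_lt (continuous_infDist_pt E) continuous_const).measurableSet
  have hpow_le_one : ∀ y : ℝ, y ≤ 0 → (2:ℝ)^y ≤ 1 := fun y hy =>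
    Real.rpow_le_one_of_one_le_of_nonpos one_le_two hy
  -- the main induction
  have main : ∀ k : ℕ, ∀ w ∈ E, ∀ ρ r : ℝ, 0 < r → r < ρ →
      ENNReal.ofReal ρ < diamBound E → ρ ≤ 2^k * r →
      ENNReal.ofReal (c₀ * (2:ℝ) ^ (-(β * k))) * μ (ball w ρ) ≤
        μ ({x | infDist x E < r} ∩ ball w (2 * ρ)) := by
    intro k
    induction k using Nat.strong_induction_on with
    | _ k IH =>
    intro w hw ρ r hr hrρ hρD hρk
    have hρ0 : 0 < ρ := hr.trans hrρ
    have hexp_le_one : (2:ℝ) ^ (-(β * (k:ℝ))) ≤ 1 :=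
      hpow_le_one _ (neg_nonpos.mpr (by positivity))
    rcases le_or_gt ρ (32 * r) with hbase | hbig
    · -- base case : r is comparable to ρ
      have hsub : ball w (ρ/32) ⊆ {x | infDist x E < r} ∩ ball w (2*ρ) := by
        intro x hx
        refine ⟨lt_of_le_of_lt (infDist_le_dist_of_mem hw)
          (lt_of_lt_of_le (mem_ball.mp hx) (by linarith)), ?_⟩
        exact ball_subset_ball (by linarith) hx
      have hd : μ (ball w ρ) ≤ ENNReal.ofReal (c_μ^5) * μ (ball w (ρ/32)) :=
        aux_doubling_le μ c_μ hc0.le hdoubling 5 w (ρ/32) ρ (by positivity)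
          (by rw [show (2:ℝ)^5 = 32 by norm_num]; linarith)
      have hreal : c₀ * (2:ℝ)^(-(β*(k:ℝ))) * c_μ^5 ≤ 1 := by
        have h5 : (0:ℝ) < c_μ^5 := by positivity
        have h6 : c₀ * (2:ℝ)^(-(β*(k:ℝ))) ≤ (c_μ^5)⁻¹ := by
          have := mul_le_mul hc₀c hexp_le_one (by positivity) (by positivity)
          rw [mul_one] at this
          exact this
        calc c₀ * (2:ℝ)^(-(β*(k:ℝ))) * c_μ^5 ≤ (c_μ^5)⁻¹ * c_μ^5 :=
              mul_le_mul_of_nonneg_right h6 h5.le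
          _ = 1 := inv_mul_cancel₀ h5.ne'
      calc ENNReal.ofReal (c₀ * (2:ℝ)^(-(β*(k:ℝ)))) * μ (ball w ρ)
          ≤ ENNReal.ofReal (c₀ * (2:ℝ)^(-(β*(k:ℝ)))) *
            (ENNReal.ofReal (c_μ^5) * μ (ball w (ρ/32))) := mul_le_mul_right hd _
        _ = ENNReal.ofReal (c₀ * (2:ℝ)^(-(β*(k:ℝ))) * c_μ^5) * μ (ball w (ρ/32)) := by
            rw [← mul_assoc, ← ENNReal.ofReal_mul (by positivity)]
        _ ≤ 1 * μ (ball w (ρ/32)) := mul_le_mul_left (ENNReal.ofReal_le_one.mpr hreal) _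
        _ = μ (ball w (ρ/32)) := one_mul _
        _ ≤ μ ({x | infDist x E < r} ∩ ball w (2*ρ)) := measure_mono hsub
    · -- main case
      obtain ⟨hB0, hBtop⟩ := hball w ρ hρ0
      have hB0' : μ (ball w ρ) ≠ 0 := ne_of_gt hB0
      have hBt' : μ (ball w ρ) ≠ ⊤ := ne_of_lt hBtop
      have hex : ∃ M : ℕ, ρ ≤ 2^M * r := ⟨k, hρk⟩
      have hM0 : ρ ≤ 2^(Nat.find hex) * r := Nat.find_spec hex
      have hMk : Nat.find hex ≤ k := Nat.find_min' hex hρk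
      have hM6 : 6 ≤ Nat.find hex := by
        by_contra h
        push_neg at h
        have h2 : (2:ℝ)^(Nat.find hex) ≤ 2^5 := pow_le_pow_right₀ one_le_two (by omega)
        have h3 : (2:ℝ)^(Nat.find hex) * r ≤ 2^5 * r := by nlinarith
        rw [show (2:ℝ)^5 = 32 by norm_num] at h3
        linarith
      obtain ⟨N, hNdef⟩ : ∃ N, Nat.find hex = N + 1 := ⟨Nat.find hex - 1, by omega⟩
      have hN5 : 5 ≤ N := by omega
      have hNk : N + 1 ≤ k := by omega
      rw [hNdef] at hM0
      have h2N : (2:ℝ)^N * r < ρ := not_le.mp (Nat.find_min hex (by omega))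
      by_cases hA : ENNReal.ofReal δ * μ (ball w ρ) ≤ μ ({x | infDist x E < r} ∩ ball w ρ)
      · -- the neighbourhood already has large measure
        have hreal : c₀ * (2:ℝ)^(-(β*(k:ℝ))) ≤ δ := by
          nlinarith [mul_le_mul_of_nonneg_left hexp_le_one hc₀0.le]
        calc ENNReal.ofReal (c₀ * (2:ℝ)^(-(β*(k:ℝ)))) * μ (ball w ρ)
            ≤ ENNReal.ofReal δ * μ (ball w ρ) :=
              mul_le_mul_left (ENNReal.ofReal_le_ofReal hreal) _
          _ ≤ μ ({x | infDist x E < r} ∩ ball w ρ) := hA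
          _ ≤ μ ({x | infDist x E < r} ∩ ball w (2*ρ)) :=
              measure_mono (inter_subset_inter_right _ (ball_subset_ball (by linarith)))
      · -- apply the Aikawa condition
        push_neg at hA
        set K : Set X := {y | r ≤ infDist y E} with hKdef
        have hKm : MeasurableSet K :=
          (isClosed_le continuous_const (continuous_infDist_pt E)).measurableSet
        have hBK : ball w ρ \ K = {x | infDist x E < r} ∩ ball w ρ := by
          ext y
          simp only [hKdef, Set.mem_diff, Set.mem_setOf_eq, Set.mem_inter_iff, not_le]
          tauto
        have haik2 := hδ w hw ρ hρ0 hρD K hKm (by rw [hBK]; exact hA.le)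
        set I := ∫⁻ y in ball w ρ ∩ K, ENNReal.ofReal (infDist y E ^ (-α)) ∂μ with hIdef
        have hXI : ENNReal.ofReal (ρ^(-α) / ε) * μ (ball w ρ) ≤ I := by
          have h := mul_le_mul_right haik2 (μ (ball w ρ))
          rw [← mul_assoc, ENNReal.mul_inv_cancel hB0' hBt', one_mul] at h
          rwa [mul_comm]
        -- annular decomposition
        set Aj : ℕ → Set X := fun j =>
          ({y | (2:ℝ)^j * r ≤ infDist y E} ∩ {y | infDist y E < 2^(j+1) * r}) ∩ ball w ρ
          with hAdef
        have hAmeas : ∀ j, MeasurableSet (Aj j) := fun j =>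
          (((isClosed_le continuous_const (continuous_infDist_pt E)).measurableSet).inter
            ((isOpen_lt (continuous_infDist_pt E) continuous_const).measurableSet)).inter
            measurableSet_ball
        have hAsub : ∀ j, Aj j ⊆ ball w ρ := fun j => inter_subset_right
        have hAcover : ball w ρ ∩ K ⊆ ⋃ j, Aj j := by
          intro y hy
          have h1 : r ≤ infDist y E := hy.2
          have h2 : infDist y E < 2^(N+1) * r :=
            lt_of_lt_of_le (lt_of_le_of_lt (infDist_le_dist_of_mem hw)
              (mem_ball.mp hy.1)) hM0
          obtain ⟨j, hjN, hj1, hj2⟩ := aux_dyadic N r (infDist y E) h1 h2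
          exact Set.mem_iUnion.mpr ⟨j, ⟨⟨hj1, hj2⟩, hy.1⟩⟩
        have hAempty : ∀ j, N + 1 ≤ j → Aj j = ∅ := by
          intro j hj
          rw [Set.eq_empty_iff_forall_notMem]
          intro y hy
          have h1 : (2:ℝ)^j * r ≤ infDist y E := hy.1.1
          have h3 : infDist y E < ρ :=
            lt_of_le_of_lt (infDist_le_dist_of_mem hw) (mem_ball.mp hy.2)
          have h4 : (2:ℝ)^(N+1) ≤ 2^j := pow_le_pow_right₀ one_le_two hj
          nlinarith
        have hIS : I ≤ ∑' j, ENNReal.ofReal (((2:ℝ)^j * r)^(-α)) * μ (Aj j) := by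
          calc I ≤ ∫⁻ y in ⋃ j, Aj j, ENNReal.ofReal (infDist y E ^ (-α)) ∂μ :=
                lintegral_mono_set hAcover
            _ ≤ ∑' j, ∫⁻ y in Aj j, ENNReal.ofReal (infDist y E ^ (-α)) ∂μ :=
                lintegral_iUnion_le _ _
            _ ≤ ∑' j, ENNReal.ofReal (((2:ℝ)^j * r)^(-α)) * μ (Aj j) := by
                apply ENNReal.tsum_le_tsum
                intro j
                calc ∫⁻ y in Aj j, ENNReal.ofReal (infDist y E ^ (-α)) ∂μ
                    ≤ ∫⁻ _ in Aj j, ENNReal.ofReal (((2:ℝ)^j * r)^(-α)) ∂μ := by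
                      apply setLIntegral_mono measurable_const
                      intro y hy
                      apply ENNReal.ofReal_le_ofReal
                      exact Real.rpow_le_rpow_of_nonpos (by positivity) hy.1.1
                        (neg_nonpos.mpr hα.le)
                  _ = ENNReal.ofReal (((2:ℝ)^j * r)^(-α)) * μ (Aj j) := setLIntegral_const _ _
        -- the weights for the pigeonhole
        have h1σ : (0:ℝ) < 1 - σ := by linarith
        set Θ : ℕ → ℝ := fun j => (1-σ) * σ^(N-j) * ((2:ℝ)^j * r)^α * ρ^(-α) / (4*ε)
          with hΘdef
        have hΘpos : ∀ j, 0 < Θ j := by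
          intro j
          have h2 : (0:ℝ) < ((2:ℝ)^j * r)^α := Real.rpow_pos_of_pos (by positivity) _
          have h3 : (0:ℝ) < ρ^(-α) := Real.rpow_pos_of_pos hρ0 _
          rw [hΘdef]
          positivity
        have hpig : ∃ j, j + 5 ≤ N ∧ ENNReal.ofReal (Θ j) * μ (ball w ρ) ≤ μ (Aj j) := by
          by_contra hno
          push_neg at hno
          set g : ℕ → ℝ≥0∞ := fun j => ENNReal.ofReal (((2:ℝ)^j * r)^(-α)) * μ (Aj j)
            with hgdef
          have hSsum : ∑' j, g j = ∑ j ∈ Finset.range (N+1), g j := by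
            apply tsum_eq_sum
            intro j hj
            have hj' : N + 1 ≤ j := by simpa [Finset.mem_range, not_lt] using hj
            rw [hgdef]
            simp [hAempty j hj']
          have hsplit : ∑ j ∈ Finset.range (N+1), g j =
              ∑ j ∈ Finset.range (N-4), g j + ∑ j ∈ Finset.Ico (N-4) (N+1), g j :=
            (Finset.sum_range_add_sum_Ico g (by omega)).symm
          have hpart1 : ∑ j ∈ Finset.range (N-4), g j ≤
              ENNReal.ofReal (ρ^(-α)/(4*ε)) * μ (ball w ρ) := by
            have hterm : ∀ j ∈ Finset.range (N-4), g j ≤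
                ENNReal.ofReal ((1-σ) * σ^(N-j) * (ρ^(-α)/(4*ε))) * μ (ball w ρ) := by
              intro j hj
              have hj5 : j + 5 ≤ N := by
                have := Finset.mem_range.mp hj; omega
              have hk1 : ((2:ℝ)^j * r)^(-α) * Θ j = (1-σ) * σ^(N-j) * (ρ^(-α)/(4*ε)) := by
                have hx : ((2:ℝ)^j*r)^(-α) * ((2:ℝ)^j*r)^α = 1 := by
                  rw [← Real.rpow_add (by positivity)]
                  simp
                rw [hΘdef]
                calc ((2:ℝ)^j * r)^(-α) * ((1-σ) * σ^(N-j) * ((2:ℝ)^j * r)^α * ρ^(-α) / (4*ε))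
                    = ((1-σ) * σ^(N-j) * (ρ^(-α)/(4*ε))) * (((2:ℝ)^j*r)^(-α) * ((2:ℝ)^j*r)^α) := by
                      ring
                  _ = (1-σ) * σ^(N-j) * (ρ^(-α)/(4*ε)) := by rw [hx, mul_one]
              calc g j ≤ ENNReal.ofReal (((2:ℝ)^j * r)^(-α)) *
                    (ENNReal.ofReal (Θ j) * μ (ball w ρ)) := by
                    rw [hgdef]
                    exact mul_le_mul_right (hno j hj5).le _
                _ = ENNReal.ofReal (((2:ℝ)^j * r)^(-α) * Θ j) * μ (ball w ρ) := by
                    rw [← mul_assoc, ← ENNReal.ofReal_mul (by positivity)]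
                _ = ENNReal.ofReal ((1-σ) * σ^(N-j) * (ρ^(-α)/(4*ε))) * μ (ball w ρ) := by
                    rw [hk1]
            calc ∑ j ∈ Finset.range (N-4), g j
                ≤ ∑ j ∈ Finset.range (N-4),
                    ENNReal.ofReal ((1-σ) * σ^(N-j) * (ρ^(-α)/(4*ε))) * μ (ball w ρ) :=
                  Finset.sum_le_sum hterm
              _ = (∑ j ∈ Finset.range (N-4),
                    ENNReal.ofReal ((1-σ) * σ^(N-j) * (ρ^(-α)/(4*ε)))) * μ (ball w ρ) := by
                  rw [Finset.sum_mul]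
              _ = ENNReal.ofReal (∑ j ∈ Finset.range (N-4),
                    (1-σ) * σ^(N-j) * (ρ^(-α)/(4*ε))) * μ (ball w ρ) := by
                  rw [ENNReal.ofReal_sum_of_nonneg]
                  intro j hj
                  have h3 : (0:ℝ) < ρ^(-α) := Real.rpow_pos_of_pos hρ0 _
                  positivity
              _ ≤ ENNReal.ofReal (ρ^(-α)/(4*ε)) * μ (ball w ρ) := by
                  apply mul_le_mul_left
                  apply ENNReal.ofReal_le_ofReal
                  have himg : ∑ j ∈ Finset.range (N-4), σ^(N-j) ≤
                      ∑ i ∈ Finset.range (N+1), σ^i := by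
                    have h1 : ∑ i ∈ (Finset.range (N-4)).image (fun j => N - j), σ^i =
                        ∑ j ∈ Finset.range (N-4), σ^(N-j) := by
                      apply Finset.sum_image
                      intro a ha b hb hab
                      have := Finset.mem_range.mp ha
                      have := Finset.mem_range.mp hb
                      simp only at hab
                      omega
                    rw [← h1]
                    apply Finset.sum_le_sum_of_subset_of_nonneg
                    · intro i hi
                      rw [Finset.mem_image] at hi
                      obtain ⟨a, ha, rfl⟩ := hi
                      rw [Finset.mem_range]
                      omega
                    · intro i _ _
                      positivity
                  have hgs : (1-σ) * ∑ i ∈ Finset.range (N+1), σ^i = 1 - σ^(N+1) := by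
                    have := geom_sum_mul σ (N+1)
                    linear_combination -this
                  have hσp : (0:ℝ) ≤ σ^(N+1) := by positivity
                  have h3 : (0:ℝ) < ρ^(-α) := Real.rpow_pos_of_pos hρ0 _
                  have hfact : ∑ j ∈ Finset.range (N-4), (1-σ) * σ^(N-j) * (ρ^(-α)/(4*ε))
                      = ((1-σ) * ∑ j ∈ Finset.range (N-4), σ^(N-j)) * (ρ^(-α)/(4*ε)) := by
                    rw [Finset.mul_sum, Finset.sum_mul]
                  rw [hfact]
                  have h4 : (1-σ) * ∑ j ∈ Finset.range (N-4), σ^(N-j) ≤ 1 := by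
                    calc (1-σ) * ∑ j ∈ Finset.range (N-4), σ^(N-j)
                        ≤ (1-σ) * ∑ i ∈ Finset.range (N+1), σ^i :=
                          mul_le_mul_of_nonneg_left himg h1σ.le
                      _ = 1 - σ^(N+1) := hgs
                      _ ≤ 1 := by linarith
                  nth_rewrite 2 [← one_mul (ρ^(-α)/(4*ε))]
                  apply mul_le_mul_of_nonneg_right h4 (by positivity)
          have hpart2 : ∑ j ∈ Finset.Ico (N-4) (N+1), g j ≤
              ENNReal.ofReal (5 * ((2:ℝ)^(5*α) * ρ^(-α))) * μ (ball w ρ) := by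
            have hterm2 : ∀ j ∈ Finset.Ico (N-4) (N+1), g j ≤
                ENNReal.ofReal ((2:ℝ)^(5*α) * ρ^(-α)) * μ (ball w ρ) := by
              intro j hj
              obtain ⟨hj1, hj2⟩ := Finset.mem_Ico.mp hj
              have h32 : ρ/32 ≤ (2:ℝ)^j * r := by
                have h5 : (2:ℝ)^(N-4) ≤ 2^j := pow_le_pow_right₀ one_le_two hj1
                have h6 : (2:ℝ)^(N+1) = 32 * 2^(N-4) := by
                  rw [show (32:ℝ) = 2^5 by norm_num, ← pow_add]
                  congr 1
                  omega
                have hM0' := hM0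
                rw [h6] at hM0'
                nlinarith
              have h7 : ((2:ℝ)^j * r)^(-α) ≤ (ρ/32)^(-α) :=
                Real.rpow_le_rpow_of_nonpos (by positivity) h32 (neg_nonpos.mpr hα.le)
              have h8 : (ρ/32)^(-α) = (2:ℝ)^(5*α) * ρ^(-α) := by
                have h32e : (32:ℝ) = (2:ℝ)^(5:ℝ) := by
                  rw [show (5:ℝ) = ((5:ℕ):ℝ) by norm_num, Real.rpow_natCast]
                  norm_num
                rw [Real.div_rpow hρ0.le (by norm_num : (0:ℝ) ≤ 32), h32e,
                  ← Real.rpow_mul (by norm_num : (0:ℝ) ≤ 2)]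
                rw [div_eq_mul_inv, ← Real.rpow_neg (by norm_num : (0:ℝ) ≤ 2)]
                rw [show -(5 * -α) = 5*α by ring]
                exact mul_comm _ _
              rw [hgdef]
              exact mul_le_mul' (ENNReal.ofReal_le_ofReal (h7.trans_eq h8))
                (measure_mono (hAsub j))
            calc ∑ j ∈ Finset.Ico (N-4) (N+1), g j
                ≤ (Finset.Ico (N-4) (N+1)).card •
                    (ENNReal.ofReal ((2:ℝ)^(5*α) * ρ^(-α)) * μ (ball w ρ)) :=
                  Finset.sum_le_card_nsmul _ _ _ hterm2
              _ = 5 • (ENNReal.ofReal ((2:ℝ)^(5*α) * ρ^(-α)) * μ (ball w ρ)) := by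
                  rw [Nat.card_Ico]
                  congr 1
                  omega
              _ = (5:ℝ≥0∞) * (ENNReal.ofReal ((2:ℝ)^(5*α) * ρ^(-α)) * μ (ball w ρ)) := by
                  rw [nsmul_eq_mul]
                  norm_num
              _ = ENNReal.ofReal (5 * ((2:ℝ)^(5*α) * ρ^(-α))) * μ (ball w ρ) := by
                  rw [ENNReal.ofReal_mul (by norm_num : (0:ℝ) ≤ 5), ← mul_assoc]
                  norm_num
          have hcontr : ENNReal.ofReal (ρ^(-α)/ε) * μ (ball w ρ) ≤
              ENNReal.ofReal (ρ^(-α)/(2*ε)) * μ (ball w ρ) := by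
            calc ENNReal.ofReal (ρ^(-α)/ε) * μ (ball w ρ) ≤ I := hXI
              _ ≤ ∑' j, g j := hIS
              _ = ∑ j ∈ Finset.range (N-4), g j + ∑ j ∈ Finset.Ico (N-4) (N+1), g j := by
                  rw [hSsum, hsplit]
              _ ≤ ENNReal.ofReal (ρ^(-α)/(4*ε)) * μ (ball w ρ) +
                  ENNReal.ofReal (5 * ((2:ℝ)^(5*α) * ρ^(-α))) * μ (ball w ρ) :=
                  add_le_add hpart1 hpart2
              _ = ENNReal.ofReal (ρ^(-α)/(4*ε) + 5 * ((2:ℝ)^(5*α) * ρ^(-α))) * μ (ball w ρ) := by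
                  rw [← add_mul, ← ENNReal.ofReal_add]
                  · have h3 : (0:ℝ) < ρ^(-α) := Real.rpow_pos_of_pos hρ0 _
                    positivity
                  · have h3 : (0:ℝ) < ρ^(-α) := Real.rpow_pos_of_pos hρ0 _
                    have h4 : (0:ℝ) < (2:ℝ)^(5*α) := Real.rpow_pos_of_pos two_pos _
                    positivity
              _ ≤ ENNReal.ofReal (ρ^(-α)/(2*ε)) * μ (ball w ρ) := by
                  apply mul_le_mul_left
                  apply ENNReal.ofReal_le_ofReal
                  have hε2 : ε ≤ (2:ℝ)^(-(5*α))/20 := min_le_right _ _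
                  have h2a : (2:ℝ)^(-(5*α)) * (2:ℝ)^(5*α) = 1 := by
                    rw [← Real.rpow_add two_pos]
                    norm_num
                  have h3 : (0:ℝ) < ρ^(-α) := Real.rpow_pos_of_pos hρ0 _
                  have h4 : (0:ℝ) < (2:ℝ)^(5*α) := Real.rpow_pos_of_pos two_pos _
                  have h6 : 5 * ((2:ℝ)^(5*α) * ρ^(-α)) ≤ ρ^(-α)/(4*ε) := by
                    rw [le_div_iff₀ (by positivity)]
                    have h5 : 20*ε ≤ (2:ℝ)^(-(5*α)) := by linarith
                    have h9 : 20*ε*(2:ℝ)^(5*α) ≤ 1 := by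
                      calc 20*ε*(2:ℝ)^(5*α) ≤ (2:ℝ)^(-(5*α)) * (2:ℝ)^(5*α) :=
                            mul_le_mul_of_nonneg_right h5 h4.le
                        _ = 1 := h2a
                    have h10 : 20*ε*(2:ℝ)^(5*α)*ρ^(-α) ≤ 1 * ρ^(-α) :=
                      mul_le_mul_of_nonneg_right h9 h3.le
                    nlinarith [h10]
                  have h7 : ρ^(-α)/(4*ε) + ρ^(-α)/(4*ε) = ρ^(-α)/(2*ε) := by
                    field_simp
                    ring
                  linarith
          have hstrict : ENNReal.ofReal (ρ^(-α)/(2*ε)) * μ (ball w ρ) <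
              ENNReal.ofReal (ρ^(-α)/ε) * μ (ball w ρ) := by
            have h3 : (0:ℝ) < ρ^(-α) := Real.rpow_pos_of_pos hρ0 _
            apply (ENNReal.mul_lt_mul_iff_left hB0' hBt').mpr
            rw [ENNReal.ofReal_lt_ofReal_iff (by positivity)]
            exact div_lt_div_of_pos_left h3 hε0 (by linarith)
          exact absurd hcontr (not_le.mpr hstrict)
        obtain ⟨j₀, hj₀5, hj₀A⟩ := hpig
        set ρ' := (2:ℝ)^(j₀+1) * r with hρ'def
        have hρ'0 : 0 < ρ' := by positivity
        have h16 : (16:ℝ) * 2^(j₀+1) ≤ 2^N := by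
          rw [show (16:ℝ) = 2^4 by norm_num, ← pow_add]
          exact pow_le_pow_right₀ one_le_two (by omega)
        have hρ'ρ : 16 * ρ' < ρ := by
          rw [hρ'def, ← mul_assoc]
          calc (16:ℝ) * 2^(j₀+1) * r ≤ 2^N * r := mul_le_mul_of_nonneg_right h16 hr.le
            _ < ρ := h2N
        have hch : ∀ y ∈ Aj j₀, ∃ v, v ∈ E ∧ dist y v < ρ' := by
          intro y hy
          have h1 : infDist y E < ρ' := hy.1.2
          obtain ⟨v, hv1, hv2⟩ := (infDist_lt_iff hE).mp h1
          exact ⟨v, hv1, hv2⟩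
        set xf : X → X := fun y => if h : ∃ v, v ∈ E ∧ dist y v < ρ' then h.choose else w
          with hxfdef
        have hxfP : ∀ y ∈ Aj j₀, xf y ∈ E ∧ dist y (xf y) < ρ' := by
          intro y hy
          have h := hch y hy
          have hxy : xf y = h.choose := by rw [hxfdef]; exact dif_pos h
          rw [hxy]
          exact ⟨h.choose_spec.1, h.choose_spec.2⟩
        obtain ⟨u, huA, hud, hucov⟩ :=
          Vitali.exists_disjoint_subfamily_covering_enlargement_closedBall (Aj j₀) xf
            (fun _ => 2*ρ') (2*ρ') (fun a _ => le_rfl) 4 (by norm_num)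
        have hmemA : ∀ a ∈ Aj j₀, a ∈ closedBall (xf a) (2*ρ') := by
          intro a ha
          rw [mem_closedBall]
          linarith [(hxfP a ha).2, hρ'0.le]
        have hballs_in : ∀ b ∈ u, ∀ t : ℝ, t ≤ 8*ρ' → closedBall (xf b) t ⊆ ball w (2*ρ) := by
          intro b hb t ht y hy
          have hbA := huA hb
          have h1 : dist b (xf b) < ρ' := (hxfP b hbA).2
          have h2 : dist b w < ρ := mem_ball.mp hbA.2
          have h3 : dist y (xf b) ≤ t := mem_closedBall.mp hy
          rw [mem_ball]
          have h4 := dist_triangle4 y (xf b) b w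
          have h5 : dist (xf b) b = dist b (xf b) := dist_comm _ _
          linarith
        have hcovA : Aj j₀ ⊆ ⋃ b ∈ u, closedBall (xf b) (8*ρ') := by
          intro a ha
          obtain ⟨b, hb, hsub⟩ := hucov a ha
          rw [mem_iUnion₂]
          exact ⟨b, hb, by
            rw [show (8:ℝ)*ρ' = 4*(2*ρ') by ring]
            exact hsub (hmemA a ha)⟩
        have hcnt : u.Countable := by
          have hpair : Pairwise (Function.onFun Disjoint fun b : u => closedBall (xf b.1) (2*ρ')) := by
            intro i j hij
            exact hud i.2 j.2 (fun h => hij (Subtype.ext h))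
          have hfin : μ (⋃ b : u, closedBall (xf b.1) (2*ρ')) ≠ ⊤ := by
            apply ne_of_lt
            refine lt_of_le_of_lt (measure_mono ?_) (hball w (2*ρ) (by positivity)).2
            exact iUnion_subset fun b => hballs_in b.1 b.2 (2*ρ') (by linarith)
          have hcm := MeasureTheory.Measure.countable_meas_pos_of_disjoint_of_meas_iUnion_ne_top μ
            (fun b : u => measurableSet_closedBall) hpair hfin
          have huniv : {b : u | 0 < μ (closedBall (xf b.1) (2*ρ'))} = Set.univ := by
            apply eq_univ_of_forall
            intro b
            exact lt_of_lt_of_le (hball (xf b.1) (2*ρ') (by positivity)).1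
              (measure_mono ball_subset_closedBall)
          rw [huniv] at hcm
          exact Set.countable_coe_iff.mp (Set.countable_univ_iff.mp hcm)
        have hμA1 : μ (Aj j₀) ≤ ENNReal.ofReal (c_μ^4) * ∑' b : u, μ (ball (xf b.1) ρ') := by
          calc μ (Aj j₀) ≤ μ (⋃ b ∈ u, closedBall (xf b) (8*ρ')) := measure_mono hcovA
            _ ≤ ∑' b : u, μ (closedBall (xf b.1) (8*ρ')) := measure_biUnion_le μ hcnt _
            _ ≤ ∑' b : u, ENNReal.ofReal (c_μ^4) * μ (ball (xf b.1) ρ') := by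
                apply ENNReal.tsum_le_tsum
                intro b
                calc μ (closedBall (xf b.1) (8*ρ')) ≤ μ (ball (xf b.1) (16*ρ')) :=
                      measure_mono (closedBall_subset_ball (by linarith))
                  _ ≤ ENNReal.ofReal (c_μ^4) * μ (ball (xf b.1) ρ') :=
                      aux_doubling_le μ c_μ hc0.le hdoubling 4 _ ρ' _ hρ'0 (by norm_num)
            _ = ENNReal.ofReal (c_μ^4) * ∑' b : u, μ (ball (xf b.1) ρ') :=
                ENNReal.tsum_mul_left
        have hrec : ∀ b : u, ENNReal.ofReal (c₀ * (2:ℝ)^(-(β*((j₀+1 : ℕ):ℝ)))) *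
            μ (ball (xf b.1) ρ') ≤ μ ({x | infDist x E < r} ∩ ball (xf b.1) (2*ρ')) := by
          intro b
          have hbA := huA b.2
          have h1 : r < ρ' := by
            rw [hρ'def]
            have h2 : (2:ℝ) ≤ 2^(j₀+1) := by
              calc (2:ℝ) = 2^1 := (pow_one 2).symm
                _ ≤ 2^(j₀+1) := pow_le_pow_right₀ one_le_two (by omega)
            nlinarith
          exact IH (j₀+1) (by omega) (xf b.1) (hxfP b.1 hbA).1 ρ' r hr h1
            (lt_of_le_of_lt (ENNReal.ofReal_le_ofReal (by linarith)) hρD) hρ'def.le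
        have hdisj2 : u.PairwiseDisjoint
            (fun b => {x | infDist x E < r} ∩ ball (xf b) (2*ρ')) := by
          intro i hi j hj hij
          exact (hud hi hj hij).mono (inter_subset_right.trans ball_subset_closedBall)
            (inter_subset_right.trans ball_subset_closedBall)
        have hsum3 : ∑' b : u, μ ({x | infDist x E < r} ∩ ball (xf b.1) (2*ρ')) ≤
            μ ({x | infDist x E < r} ∩ ball w (2*ρ)) := by
          rw [← measure_biUnion hcnt hdisj2
            (fun b _ => (hErmeas r).inter measurableSet_ball)]
          apply measure_mono
          refine iUnion₂_subset fun b hb => ?_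
          intro y hy
          refine ⟨hy.1, ?_⟩
          exact (ball_subset_closedBall.trans (hballs_in b hb (2*ρ') (by linarith))) hy.2
        -- the key real inequality
        set m := N - j₀ with hmdef
        have hm5 : 5 ≤ m := by omega
        have hkm : j₀ + 1 + m ≤ k := by omega
        have hσm : σ^m = (2:ℝ)^(-((m:ℝ)*((β-α)/2))) := by
          rw [hσdef, ← Real.rpow_natCast ((2:ℝ)^(-((β-α)/2))) m,
            ← Real.rpow_mul (by norm_num : (0:ℝ) ≤ 2)]
          congr 1
          ring
        have hF1 : (2:ℝ)^(-(((m:ℝ)+1)*α)) ≤ ((2:ℝ)^j₀ * r)^α * ρ^(-α) := by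
          have hprod : (2:ℝ)^(m+1) * ((2:ℝ)^j₀ * r) = 2^(N+1) * r := by
            rw [← mul_assoc, ← pow_add]
            have hmj : m + 1 + j₀ = N + 1 := by omega
            rw [hmj]
          have hb : ((2:ℝ)^(m+1))⁻¹ ≤ ((2:ℝ)^j₀ * r) / ρ := by
            rw [le_div_iff₀ hρ0]
            have h2m : (0:ℝ) < 2^(m+1) := by positivity
            rw [inv_mul_le_iff₀ h2m, hprod]
            exact hM0
          have h2' : (((2:ℝ)^(m+1))⁻¹)^α ≤ (((2:ℝ)^j₀ * r)/ρ)^α :=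
            Real.rpow_le_rpow (by positivity) hb hα.le
          have h3' : (((2:ℝ)^(m+1))⁻¹)^α = (2:ℝ)^(-(((m:ℝ)+1)*α)) := by
            rw [← Real.rpow_natCast 2 (m+1), ← Real.rpow_neg (by norm_num : (0:ℝ) ≤ 2),
              ← Real.rpow_mul (by norm_num : (0:ℝ) ≤ 2)]
            congr 1
            push_cast
            ring
          have h4' : (((2:ℝ)^j₀ * r)/ρ)^α = ((2:ℝ)^j₀ * r)^α * ρ^(-α) := by
            rw [Real.div_rpow (by positivity) hρ0.le, Real.rpow_neg hρ0.le, div_eq_mul_inv]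
          rw [← h3', ← h4']
          exact h2'
        have hF4 : c_μ^4 ≤ (1-σ) * (2:ℝ)^(-α) / (4*ε) := by
          have hεle : ε ≤ (1-σ) * (2:ℝ)^(-α) / (4 * c_μ^4) := min_le_left _ _
          rw [le_div_iff₀ (by positivity)] at hεle ⊢
          nlinarith [hεle]
        have hEXP : (2:ℝ)^(-(β*(k:ℝ))) * (2:ℝ)^(-α) ≤
            (2:ℝ)^(-(β*((j₀+1:ℕ):ℝ))) * (σ^m * (2:ℝ)^(-(((m:ℝ)+1)*α))) := by
          rw [hσm, ← Real.rpow_add two_pos, ← Real.rpow_add two_pos,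
            ← Real.rpow_add two_pos]
          apply Real.rpow_le_rpow_of_exponent_le one_le_two
          have hc1 : ((j₀:ℝ) + 1 + m) ≤ (k:ℝ) := by exact_mod_cast hkm
          have hmn : (0:ℝ) ≤ (m:ℝ) := Nat.cast_nonneg m
          have hint1 : β * ((j₀:ℝ) + 1 + m) ≤ β * k := mul_le_mul_of_nonneg_left hc1 hβ.le
          have hint2 : (0:ℝ) ≤ (m:ℝ) * (β - α) := mul_nonneg hmn (by linarith)
          push_cast
          linarith
        have hii : c_μ^4 * (c₀ * (2:ℝ)^(-(β*(k:ℝ)))) ≤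
            (c₀ * (2:ℝ)^(-(β*((j₀+1:ℕ):ℝ)))) * Θ j₀ := by
          have hθ : Θ j₀ = (1-σ) * σ^m * ((2:ℝ)^j₀ * r)^α * ρ^(-α) / (4*ε) := by
            rw [hmdef]
          rw [hθ]
          have hnn : (0:ℝ) ≤ c₀ * ((1-σ)/(4*ε)) :=
            mul_nonneg hc₀0.le (div_nonneg h1σ.le (by positivity))
          calc c_μ^4 * (c₀ * (2:ℝ)^(-(β*(k:ℝ))))
              ≤ ((1-σ) * (2:ℝ)^(-α)/(4*ε)) * (c₀ * (2:ℝ)^(-(β*(k:ℝ)))) :=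
                mul_le_mul_of_nonneg_right hF4 (by positivity)
            _ = (c₀ * ((1-σ)/(4*ε))) * ((2:ℝ)^(-(β*(k:ℝ))) * (2:ℝ)^(-α)) := by ring
            _ ≤ (c₀ * ((1-σ)/(4*ε))) *
                ((2:ℝ)^(-(β*((j₀+1:ℕ):ℝ))) * (σ^m * (2:ℝ)^(-(((m:ℝ)+1)*α)))) :=
                mul_le_mul_of_nonneg_left hEXP hnn
            _ ≤ (c₀ * ((1-σ)/(4*ε))) *
                ((2:ℝ)^(-(β*((j₀+1:ℕ):ℝ))) * (σ^m * (((2:ℝ)^j₀ * r)^α * ρ^(-α)))) := by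
                apply mul_le_mul_of_nonneg_left _ hnn
                apply mul_le_mul_of_nonneg_left _ (by positivity)
                exact mul_le_mul_of_nonneg_left hF1 (by positivity)
            _ = (c₀ * (2:ℝ)^(-(β*((j₀+1:ℕ):ℝ)))) *
                ((1-σ) * σ^m * ((2:ℝ)^j₀ * r)^α * ρ^(-α) / (4*ε)) := by
                ring
        have hchain : ENNReal.ofReal (c_μ^4) *
            (ENNReal.ofReal (c₀ * (2:ℝ)^(-(β*(k:ℝ)))) * μ (ball w ρ))
            ≤ ENNReal.ofReal (c_μ^4) * μ ({x | infDist x E < r} ∩ ball w (2*ρ)) := by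
          have ha1 : (0:ℝ) ≤ c₀ * (2:ℝ)^(-(β*((j₀+1:ℕ):ℝ))) := by positivity
          calc ENNReal.ofReal (c_μ^4) *
              (ENNReal.ofReal (c₀ * (2:ℝ)^(-(β*(k:ℝ)))) * μ (ball w ρ))
              = ENNReal.ofReal (c_μ^4 * (c₀ * (2:ℝ)^(-(β*(k:ℝ))))) * μ (ball w ρ) := by
                rw [← mul_assoc, ← ENNReal.ofReal_mul (by positivity : (0:ℝ) ≤ c_μ^4)]
            _ ≤ ENNReal.ofReal ((c₀ * (2:ℝ)^(-(β*((j₀+1:ℕ):ℝ)))) * Θ j₀) * μ (ball w ρ) :=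
                mul_le_mul_left (ENNReal.ofReal_le_ofReal hii) _
            _ = ENNReal.ofReal (c₀ * (2:ℝ)^(-(β*((j₀+1:ℕ):ℝ)))) *
                (ENNReal.ofReal (Θ j₀) * μ (ball w ρ)) := by
                rw [ENNReal.ofReal_mul ha1, mul_assoc]
            _ ≤ ENNReal.ofReal (c₀ * (2:ℝ)^(-(β*((j₀+1:ℕ):ℝ)))) * μ (Aj j₀) :=
                mul_le_mul_right hj₀A _
            _ ≤ ENNReal.ofReal (c₀ * (2:ℝ)^(-(β*((j₀+1:ℕ):ℝ)))) *
                (ENNReal.ofReal (c_μ^4) * ∑' b : u, μ (ball (xf b.1) ρ')) :=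
                mul_le_mul_right hμA1 _
            _ = ENNReal.ofReal (c_μ^4) * ∑' b : u,
                ENNReal.ofReal (c₀ * (2:ℝ)^(-(β*((j₀+1:ℕ):ℝ)))) * μ (ball (xf b.1) ρ') := by
                rw [ENNReal.tsum_mul_left]
                ring
            _ ≤ ENNReal.ofReal (c_μ^4) * ∑' b : u,
                μ ({x | infDist x E < r} ∩ ball (xf b.1) (2*ρ')) :=
                mul_le_mul_right (ENNReal.tsum_le_tsum hrec) _
            _ ≤ ENNReal.ofReal (c_μ^4) * μ ({x | infDist x E < r} ∩ ball w (2*ρ)) :=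
                mul_le_mul_right hsum3 _
        exact (ENNReal.mul_le_mul_iff_right (ENNReal.ofReal_pos.mpr (by positivity)).ne'
          ENNReal.ofReal_ne_top).mp hchain
  -- conclusion
  have hbdd : BddBelow {Q : ℝ | 0 ≤ Q ∧ ∃ c : ℝ, 0 < c ∧
      ∀ z ∈ E, ∀ r R : ℝ, 0 < r → r < R → ENNReal.ofReal R < diamBound E →
      ENNReal.ofReal (c * (r / R) ^ Q) * μ (ball z R) ≤
        μ ({x | infDist x E < r} ∩ ball z R)} := ⟨0, fun Q hQ => hQ.1⟩
  have hmem : (s*p) ∈ {Q : ℝ | 0 ≤ Q ∧ ∃ c : ℝ, 0 < c ∧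
      ∀ z ∈ E, ∀ r R : ℝ, 0 < r → r < R → ENNReal.ofReal R < diamBound E →
      ENNReal.ofReal (c * (r / R) ^ Q) * μ (ball z R) ≤
        μ ({x | infDist x E < r} ∩ ball z R)} := by
    refine ⟨by positivity, c₀ / c_μ, by positivity, ?_⟩
    intro z hz r R hr hrR hRD
    have hR0 : 0 < R := hr.trans hrR
    have hrR1 : r / R < 1 := (div_lt_one hR0).mpr hrR
    have hrR0 : 0 < r / R := div_pos hr hR0
    have hc₀1 : c₀ ≤ 1 := by
      have h5 : (1:ℝ) ≤ c_μ^5 := one_le_pow₀ hc.le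
      have : (c_μ^5)⁻¹ ≤ 1 := by
        rw [inv_le_one_iff₀]
        right; exact h5
      linarith [hc₀c]
    rcases le_or_gt (R/2) r with hcase | hcase
    · -- r ≥ R/2 : direct from doubling
      have hsub : ball z (R/2) ⊆ {x | infDist x E < r} ∩ ball z R := by
        intro x hx
        refine ⟨lt_of_le_of_lt (infDist_le_dist_of_mem hz)
          (lt_of_lt_of_le (mem_ball.mp hx) hcase), ?_⟩
        exact ball_subset_ball (by linarith) hx
      have hd : μ (ball z R) ≤ ENNReal.ofReal (c_μ^1) * μ (ball z (R/2)) :=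
        aux_doubling_le μ c_μ hc0.le hdoubling 1 z (R/2) R (by positivity) (by rw [pow_one]; linarith)
      have hreal : c₀/c_μ * (r/R)^β * c_μ^1 ≤ 1 := by
        have h1 : c₀/c_μ * (r/R)^β * c_μ^1 = c₀ * (r/R)^β := by
          field_simp
        rw [h1]
        have h2 : (r/R)^β ≤ 1 := Real.rpow_le_one hrR0.le hrR1.le hβ.le
        calc c₀ * (r/R)^β ≤ c₀ * 1 := by gcongr
          _ ≤ 1 := by rw [mul_one]; exact hc₀1
      calc ENNReal.ofReal (c₀/c_μ * (r/R)^β) * μ (ball z R)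
          ≤ ENNReal.ofReal (c₀/c_μ * (r/R)^β) * (ENNReal.ofReal (c_μ^1) * μ (ball z (R/2))) := by
            exact mul_le_mul_right hd _
        _ = ENNReal.ofReal (c₀/c_μ * (r/R)^β * c_μ^1) * μ (ball z (R/2)) := by
            rw [← mul_assoc, ← ENNReal.ofReal_mul (by positivity)]
        _ ≤ 1 * μ (ball z (R/2)) :=
            mul_le_mul_left (ENNReal.ofReal_le_one.mpr hreal) _
        _ = μ (ball z (R/2)) := one_mul _
        _ ≤ μ ({x | infDist x E < r} ∩ ball z R) := measure_mono hsub
    · -- r < R/2 : use the main estimate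
      have hρ0 : 0 < R/2 := by positivity
      have hex : ∃ n : ℕ, R/2 ≤ 2^n * r := by
        obtain ⟨n, hn⟩ := pow_unbounded_of_one_lt ((R/2)/r) one_lt_two
        exact ⟨n, le_of_lt (by rw [div_lt_iff₀ hr] at hn; linarith [hn])⟩
      set k := Nat.find hex with hkdef
      have hk : R/2 ≤ 2^k * r := Nat.find_spec hex
      have hk1 : 1 ≤ k := by
        by_contra h
        push_neg at h
        interval_cases k
        · simp only [pow_zero, one_mul] at hk; linarith
      have hkmin : ¬ (R/2 ≤ 2^(k-1) * r) := Nat.find_min hex (by omega)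
      push_neg at hkmin
      have h2k : (2:ℝ)^k * r < R := by
        have hsplit : (2:ℝ)^k = 2 * 2^(k-1) := by
          rw [← pow_succ']
          congr 1
          omega
        rw [hsplit]
        nlinarith [hkmin]
      have hmn := main k z hz (R/2) r hr (by linarith)
        (lt_of_le_of_lt (ENNReal.ofReal_le_ofReal (by linarith)) hRD) hk
      rw [show 2 * (R/2) = R by ring] at hmn
      have hreal : c₀/c_μ * (r/R)^β * c_μ^1 ≤ c₀ * (2:ℝ)^(-(β*(k:ℝ))) := by
        have h1 : c₀/c_μ * (r/R)^β * c_μ^1 = c₀ * (r/R)^β := by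
          field_simp
        rw [h1]
        have h2 : (r/R) ≤ (2:ℝ)^(-(k:ℝ)) := by
          rw [Real.rpow_neg (by norm_num : (0:ℝ) ≤ 2), Real.rpow_natCast]
          rw [div_le_iff₀ hR0, inv_mul_eq_div, le_div_iff₀ (pow_pos two_pos k)]
          nlinarith [h2k]
        have h3 : (r/R)^β ≤ ((2:ℝ)^(-(k:ℝ)))^β := Real.rpow_le_rpow hrR0.le h2 hβ.le
        have h4 : ((2:ℝ)^(-(k:ℝ)))^β = (2:ℝ)^(-(β*(k:ℝ))) := by
          rw [← Real.rpow_mul (by norm_num : (0:ℝ) ≤ 2)]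
          ring_nf
        calc c₀ * (r/R)^β ≤ c₀ * ((2:ℝ)^(-(k:ℝ)))^β := by gcongr
          _ = c₀ * (2:ℝ)^(-(β*(k:ℝ))) := by rw [h4]
      calc ENNReal.ofReal (c₀/c_μ * (r/R)^β) * μ (ball z R)
          ≤ ENNReal.ofReal (c₀/c_μ * (r/R)^β) * (ENNReal.ofReal (c_μ^1) * μ (ball z (R/2))) := by
            exact mul_le_mul_right
              (aux_doubling_le μ c_μ hc0.le hdoubling 1 z (R/2) R (by positivity) (by rw [pow_one]; linarith)) _
        _ = ENNReal.ofReal (c₀/c_μ * (r/R)^β * c_μ^1) * μ (ball z (R/2)) := by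
            rw [← mul_assoc, ← ENNReal.ofReal_mul (by positivity)]
        _ ≤ ENNReal.ofReal (c₀ * (2:ℝ)^(-(β*(k:ℝ)))) * μ (ball z (R/2)) :=
            mul_le_mul_left (ENNReal.ofReal_le_ofReal hreal) _
        _ ≤ μ ({x | infDist x E < r} ∩ ball z R) := hmn
  exact csInf_le hbdd hmem
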